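/- Let M, d be real numbers with d ≠ 0, let j = (M/3, M/3, M/3) in EuclideanSpace ℝ (Fin 3), and consider the six points obtained by applying all permutations of coordinates to the point (M/3 + d, M/3, M/3 − d). These six points are pairwise distinct, each lies in the plane x + y + z = M, each is at distance √2·|d| from j, and they can be enumerated as p₁, …, p₆ so that dist pᵢ p_{i+1} = √2·|d| for all i (indices cyclic mod 6); hence they form a regular hexagon with barycenter j. -/

import Mathlib

def hexPerm : Fin 6 → Equiv.Perm (Fin 3)
  | 0 => 1
  | 1 => Equiv.swap 0 1
  | 2 => Equiv.swap 0 1 * Equiv.swap 0 2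
  | 3 => Equiv.swap 0 2
  | 4 => Equiv.swap 0 2 * Equiv.swap 0 1
  | 5 => Equiv.swap 1 2

lemma hexPerm_surj : ∀ σ : Equiv.Perm (Fin 3), ∃ k : Fin 6, σ = hexPerm k := by decide

lemma sqrt2d (d : ℝ) : Real.sqrt (d ^ 2 + d ^ 2) = Real.sqrt 2 * |d| := by
  rw [show d ^ 2 + d ^ 2 = 2 * d ^ 2 by ring, Real.sqrt_mul (by norm_num), Real.sqrt_sq_eq_abs]

theorem diagonal_trajectory_is_regular_hexagon
    (M d : ℝ) (hd : d ≠ 0)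
    (j : EuclideanSpace ℝ (Fin 3)) (hj : j = ![M / 3, M / 3, M / 3])
    (p₀ : EuclideanSpace ℝ (Fin 3)) (hp₀ : p₀ = ![M / 3 + d, M / 3, M / 3 - d]) :
    ∃ p : Fin 6 → EuclideanSpace ℝ (Fin 3),
      Function.Injective p ∧
      Set.range p = {q : EuclideanSpace ℝ (Fin 3) |
        ∃ σ : Equiv.Perm (Fin 3), q = fun i => p₀ (σ i)} ∧
      (∀ i : Fin 6, p i 0 + p i 1 + p i 2 = M) ∧
      (∀ i : Fin 6, dist (p i) j = Real.sqrt 2 * |d|) ∧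
      (∀ i : Fin 6, dist (p i) (p (i + 1)) = Real.sqrt 2 * |d|) := by
  have hj' : j = WithLp.toLp 2 ![M / 3, M / 3, M / 3] := by rw [← hj]
  have hp₀' : p₀ = WithLp.toLp 2 ![M / 3 + d, M / 3, M / 3 - d] := by rw [← hp₀]
  subst hj' hp₀'
  refine ⟨fun k => WithLp.toLp 2 (fun i => (WithLp.toLp 2 ![M / 3 + d, M / 3, M / 3 - d] : EuclideanSpace ℝ (Fin 3)) (hexPerm k i)), ?_, ?_, ?_, ?_, ?_⟩
  · intro a b h
    have h' := congrArg WithLp.ofLp h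
    have h0 := congrFun h' 0
    have h1 := congrFun h' 1
    fin_cases a <;> fin_cases b <;>
      simp (config := { decide := true }) [hexPerm, Equiv.swap_apply_def] at h0 h1 ⊢ <;>
      exact hd (by linarith)
  · ext q
    constructor
    · rintro ⟨k, rfl⟩
      exact ⟨hexPerm k, rfl⟩
    · rintro ⟨σ, hσ⟩
      obtain rfl : q = WithLp.toLp 2 (fun i => (WithLp.toLp 2 ![M / 3 + d, M / 3, M / 3 - d] : EuclideanSpace ℝ (Fin 3)) (σ i)) := by
        rw [← hσ]
      obtain ⟨k, rfl⟩ := hexPerm_surj σ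
      exact ⟨k, rfl⟩
  · intro i
    fin_cases i <;> simp (config := { decide := true }) [hexPerm, Equiv.swap_apply_def] <;> ring
  · intro i
    fin_cases i <;>
      · simp (config := { decide := true }) [EuclideanSpace.dist_eq, Real.dist_eq, Fin.sum_univ_three, sq_abs,
          hexPerm, Equiv.swap_apply_def]
        rw [← sqrt2d d]
  · intro i
    fin_cases i <;>
      · simp (config := { decide := true }) [EuclideanSpace.dist_eq, Real.dist_eq, Fin.sum_univ_three, sq_abs,
          hexPerm, Equiv.swap_apply_def]
        rw [← sqrt2d d]
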